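/- arXiv:2009.06568 — 2 statements merged into one kernel-verified Lean document; each statement's English description precedes it below -/
import Mathlib

section
/- Let A be an invertible (n+1)×(n+1) real matrix and K ≥ 1. Suppose the induced projective transformation maps the box B = [-1,1]^n (viewed in the affine chart {x_{n+1}=1} of RP^n) into the box K·B = [-K,K]^n. Then for all indices i, j, we have |A_{ij}| ≤ 2K·|A_{n+1,n+1}|. -/
open Matrix

/-- The point of the affine chart `{x_{n+1} = 1}` of `ℝPⁿ`, in homogeneous coordinates. -/
def chart {n : ℕ} (x : Fin n → ℝ) : Fin (n + 1) → ℝ := Fin.snoc x 1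

lemma mulVec_chart {n : ℕ} (A : Matrix (Fin (n + 1)) (Fin (n + 1)) ℝ)
    (x : Fin n → ℝ) (k : Fin (n + 1)) :
    A.mulVec (chart x) k = (∑ j, A k j.castSucc * x j) + A k (Fin.last n) := by
  simp [chart, Matrix.mulVec, dotProduct, Fin.sum_univ_castSucc]

lemma mulVec_chart_single {n : ℕ} (A : Matrix (Fin (n + 1)) (Fin (n + 1)) ℝ)
    (j : Fin n) (t : ℝ) (k : Fin (n + 1)) :
    A.mulVec (chart (Pi.single j t)) k = A k j.castSucc * t + A k (Fin.last n) := by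
  rw [mulVec_chart]
  congr 1
  rw [Finset.sum_eq_single j]
  · simp
  · intro m _ hm; simp [Pi.single_apply, hm]
  · simp

lemma single_mem {n : ℕ} (j : Fin n) (t : ℝ) (ht : |t| ≤ 1) :
    ∀ m, |(Pi.single j t : Fin n → ℝ) m| ≤ 1 := by
  intro m
  rcases eq_or_ne m j with h | h
  · subst h; simpa using ht
  · simp [Pi.single_apply, h]

/-- **Box estimate**: if the projective transformation induced by `A` maps the box
`[-1,1]^n` (in the affine chart) into `[-K,K]^n`, then `|A i j| ≤ 2K·|A_{n+1,n+1}|`. -/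
theorem box_estimate {n : ℕ} (A : Matrix (Fin (n + 1)) (Fin (n + 1)) ℝ)
    (hA : IsUnit A.det) (K : ℝ) (hK : 1 ≤ K)
    (hbox : ∀ x : Fin n → ℝ, (∀ i, |x i| ≤ 1) →
      (A.mulVec (chart x)) (Fin.last n) ≠ 0 ∧
      ∀ i : Fin n,
        |(A.mulVec (chart x)) i.castSucc / (A.mulVec (chart x)) (Fin.last n)| ≤ K) :
    ∀ i j, |A i j| ≤ 2 * K * |A (Fin.last n) (Fin.last n)| := by
  set c := A (Fin.last n) (Fin.last n) with hc
  have h0 := hbox 0 (by intro i; simp)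
  have hc0 : c ≠ 0 := by
    have := h0.1
    rw [mulVec_chart] at this
    simpa using this
  have hcpos : 0 < |c| := abs_pos.mpr hc0
  -- key: |A last j'| ≤ |c| for j' < n
  have hlast : ∀ j' : Fin n, |A (Fin.last n) j'.castSucc| ≤ |c| := by
    intro j'
    by_contra h
    push_neg at h
    set a := A (Fin.last n) j'.castSucc with ha
    have ha0 : a ≠ 0 := by
      intro h'; rw [h'] at h; simp at h; linarith [hcpos]
    set t := -c / a with ht
    have htle : |t| ≤ 1 := by
      rw [ht, abs_div, abs_neg, div_le_one (abs_pos.mpr ha0)]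
      linarith
    have := (hbox (Pi.single j' t) (single_mem j' t htle)).1
    rw [mulVec_chart_single] at this
    apply this
    field_simp [ht]
    simp only [← ha, ← hc]
    rw [ht, mul_div_assoc', mul_comm a, mul_div_assoc, div_self ha0]; ring
  -- ratio bounds at singles
  have hnum : ∀ (j' : Fin n) (t : ℝ), |t| ≤ 1 → ∀ i' : Fin n,
      |A i'.castSucc j'.castSucc * t + A i'.castSucc (Fin.last n)| ≤
        K * |A (Fin.last n) j'.castSucc * t + c| := by
    intro j' t ht i'
    have h := (hbox (Pi.single j' t) (single_mem j' t ht))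
    have h2 := h.2 i'
    rw [mulVec_chart_single, mulVec_chart_single] at h2
    have hd : A (Fin.last n) j'.castSucc * t + c ≠ 0 := by
      have := h.1; rwa [mulVec_chart_single] at this
    rw [abs_div, div_le_iff₀ (abs_pos.mpr hd)] at h2
    exact h2
  intro i j
  have h2K : 1 ≤ 2 * K := by linarith
  refine Fin.lastCases ?_ ?_ i
  · refine Fin.lastCases ?_ ?_ j
    · nlinarith [hcpos]
    · intro j'
      have := hlast j'
      nlinarith [hcpos, abs_nonneg (A (Fin.last n) j'.castSucc)]
  · intro i'
    have hd0 : |A i'.castSucc (Fin.last n)| ≤ K * |c| := by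
      have h2 := h0.2 i'
      rw [mulVec_chart, mulVec_chart] at h2
      simp only [Pi.zero_apply, mul_zero, Finset.sum_const_zero, zero_add] at h2
      rw [abs_div, div_le_iff₀ hcpos] at h2
      exact h2
    refine Fin.lastCases ?_ ?_ j
    · nlinarith [abs_nonneg (A i'.castSucc (Fin.last n)), hcpos]
    · intro j'
      set a := A (Fin.last n) j'.castSucc
      set b := A i'.castSucc j'.castSucc
      set d := A i'.castSucc (Fin.last n)
      have e1 : |b + d| ≤ K * |a + c| := by
        have := hnum j' 1 (by norm_num) i'
        simpa using this
      have e2 : |-b + d| ≤ K * |-a + c| := by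
        have := hnum j' (-1) (by norm_num) i'
        have h' : b * (-1) + d = -b + d := by ring
        have h'' : a * (-1) + c = -a + c := by ring
        rwa [h', h''] at this
      have t1 : |a + c| ≤ |a| + |c| := abs_add_le _ _
      have t2 : |-a + c| ≤ |a| + |c| := by
        calc |-a + c| ≤ |-a| + |c| := abs_add_le _ _
        _ = |a| + |c| := by rw [abs_neg]
      have t3 : |2 * b| ≤ |b + d| + |-b + d| := by
        have h' : 2 * b = (b + d) - (-b + d) := by ring
        rw [h']
        exact abs_sub _ _
      have t4 : |2 * b| = 2 * |b| := by rw [abs_mul]; norm_num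
      have ha := hlast j'
      nlinarith [abs_nonneg a, abs_nonneg b, hcpos]
end

section
/- For each dimension n there is a constant K = K(n) > 1 such that: if Ω ⊂ ℝ^n is an open bounded convex set with centroid at the origin and inertia tensor equal to the standard quadratic form x_1² + ... + x_n², then K^{-1}·[-1,1]^n ⊆ Ω ⊆ K·[-1,1]^n. -/
set_option linter.unusedSectionVars false
set_option linter.unusedVariables false
set_option maxHeartbeats 1000000

open MeasureTheory

/-- The centroid of a set in `ℝⁿ`. -/
noncomputable def centroid {n : ℕ} (Ω : Set (EuclideanSpace ℝ (Fin n))) :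
    EuclideanSpace ℝ (Fin n) :=
  (volume Ω).toReal⁻¹ • ∫ x in Ω, x

/-- The inertia tensor of a set with centroid at the origin, as a quadratic form. -/
noncomputable def inertia {n : ℕ} (Ω : Set (EuclideanSpace ℝ (Fin n)))
    (y : EuclideanSpace ℝ (Fin n)) : ℝ :=
  ∫ x in Ω, (‖x‖ ^ 2 * ‖y‖ ^ 2 - (inner ℝ x y : ℝ) ^ 2)

namespace JohnHelper

open Bornology Metric Set Module Pointwise

noncomputable section

abbrev Eu (n : ℕ) := EuclideanSpace ℝ (Fin n)

variable {n : ℕ}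

lemma coord_abs_le_norm (x : Eu n) (i : Fin n) : |x i| ≤ ‖x‖ := by
  rw [EuclideanSpace.norm_eq]
  have h1 : |x i| = Real.sqrt ((x i)^2) := (Real.sqrt_sq_eq_abs _).symm
  rw [h1]
  apply Real.sqrt_le_sqrt
  have := Finset.single_le_sum (f := fun j => ‖x j‖^2) (fun j _ => by positivity)
    (Finset.mem_univ i)
  simpa [Real.norm_eq_abs, sq_abs] using this

lemma norm_sq_eq (x : Eu n) : ‖x‖^2 = ∑ i, (x i)^2 := by
  rw [EuclideanSpace.norm_eq, Real.sq_sqrt (by positivity)]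
  simp [Real.norm_eq_abs, sq_abs]

lemma integrableOn_of_continuous {F : Type*} [NormedAddCommGroup F] [NormedSpace ℝ F]
    {f : Eu n → F} (hf : Continuous f) {Ω : Set (Eu n)} (hb : IsBounded Ω) :
    IntegrableOn f Ω volume :=
  ((hf.continuousOn).integrableOn_compact hb.isCompact_closure).mono_set subset_closure

/-- the constant `1/(n-1)`. -/
def cc (n : ℕ) : ℝ := ((n:ℝ) - 1)⁻¹
/-- volume upper bound. -/
def VV (n : ℕ) : ℝ := (volume (ball (0 : Eu n) 1)).toReal + 2
/-- width lower bound. -/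
def ww (n : ℕ) : ℝ := Real.sqrt (cc n / VV n)
def cube (n : ℕ) : Set (Eu n) := {x | ∀ i, x i ∈ Icc (0:ℝ) (n:ℝ)⁻¹}
def gam (n : ℕ) : ℝ := (volume (cube n)).toReal
/-- volume lower bound. -/
def vol0 (n : ℕ) : ℝ := (ww n / 2)^n / (n.factorial) * gam n
def tt (n : ℕ) : ℝ := Real.sqrt (2 * cc n / vol0 n)
/-- circumradius bound. -/
def RR (n : ℕ) : ℝ := max (4 * tt n) (Real.sqrt (32 * 2^n * cc n / vol0 n))
/-- inradius bound. -/
def dd (n : ℕ) : ℝ := cc n / (VV n * RR n)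

variable (hn : 2 ≤ n)
include hn

lemma n1pos : (0:ℝ) < (n:ℝ) - 1 := by
  have : (2:ℝ) ≤ (n:ℝ) := by exact_mod_cast hn
  linarith

lemma cc_pos : 0 < cc n := inv_pos.2 (n1pos hn)

lemma cc_le_one : cc n ≤ 1 := by
  have h := n1pos hn
  have : (2:ℝ) ≤ (n:ℝ) := by exact_mod_cast hn
  rw [cc, inv_le_one_iff₀]; right; linarith

lemma VV_pos : 0 < VV n := by
  have : (0:ℝ) ≤ (volume (ball (0 : Eu n) 1)).toReal := ENNReal.toReal_nonneg
  rw [VV]; linarith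

lemma ww_pos : 0 < ww n :=
  Real.sqrt_pos.2 (div_pos (cc_pos hn) (VV_pos hn))

lemma cube_bounded : IsBounded (cube n) := by
  rw [isBounded_iff_forall_norm_le]
  refine ⟨(n:ℝ), fun x hx => ?_⟩
  have h1 : ‖x‖^2 ≤ ∑ _i : Fin n, ((n:ℝ)⁻¹)^2 := by
    rw [norm_sq_eq]
    apply Finset.sum_le_sum
    intro i _
    have := hx i
    have h0 : (0:ℝ) ≤ x i := this.1
    have h2 : x i ≤ (n:ℝ)⁻¹ := this.2
    nlinarith [inv_nonneg.2 (Nat.cast_nonneg n : (0:ℝ) ≤ n)]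
  have hnp : (0:ℝ) < n := by positivity
  have h2 : ∑ _i : Fin n, ((n:ℝ)⁻¹)^2 = (n:ℝ)⁻¹ := by
    rw [Finset.sum_const, Finset.card_univ, Fintype.card_fin, nsmul_eq_mul]
    field_simp
  have h3 : ‖x‖^2 ≤ (n:ℝ)⁻¹ := h1.trans_eq h2
  have h1n : (1:ℝ) ≤ (n:ℝ) := by exact_mod_cast hn.trans' (by norm_num)
  have h4 : (n:ℝ)⁻¹ ≤ 1 := inv_le_one_of_one_le₀ h1n
  have h5 : ‖x‖ ≤ 1 := by nlinarith [norm_nonneg x]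
  linarith

lemma gam_pos : 0 < gam n := by
  rw [gam, ENNReal.toReal_pos_iff]
  constructor
  · have hsub : {x : Eu n | ∀ i, x i ∈ Ioo (0:ℝ) (n:ℝ)⁻¹} ⊆ cube n := by
      intro x hx i; exact ⟨(hx i).1.le, (hx i).2.le⟩
    have hop : IsOpen {x : Eu n | ∀ i, x i ∈ Ioo (0:ℝ) (n:ℝ)⁻¹} := by
      have : {x : Eu n | ∀ i, x i ∈ Ioo (0:ℝ) (n:ℝ)⁻¹} =
          ⋂ i, (fun x : Eu n => x i) ⁻¹' (Ioo (0:ℝ) (n:ℝ)⁻¹) := by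
        ext x; simp [Set.mem_iInter]
      rw [this]
      exact isOpen_iInter_of_finite fun i =>
        isOpen_Ioo.preimage (EuclideanSpace.proj (𝕜 := ℝ) i).continuous
    have hne : {x : Eu n | ∀ i, x i ∈ Ioo (0:ℝ) (n:ℝ)⁻¹}.Nonempty := by
      refine ⟨WithLp.toLp 2 (fun _ => ((2*n:ℕ):ℝ)⁻¹), fun i => ?_⟩
      have hnp : (0:ℝ) < (n:ℝ) := by
        have : (2:ℝ) ≤ (n:ℝ) := by exact_mod_cast hn
        linarith
      constructor
      · positivity
      · rw [inv_lt_inv₀ (by positivity) hnp]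
        push_cast; linarith
    calc (0:ENNReal) < volume {x : Eu n | ∀ i, x i ∈ Ioo (0:ℝ) (n:ℝ)⁻¹} :=
          hop.measure_pos volume hne
      _ ≤ volume (cube n) := measure_mono hsub
  · exact (cube_bounded hn).measure_lt_top

lemma vol0_pos : 0 < vol0 n := by
  have h1 := ww_pos hn
  have h2 := gam_pos hn
  have h3 : (0:ℝ) < n.factorial := by exact_mod_cast n.factorial_pos
  rw [vol0]; positivity

lemma tt_pos : 0 < tt n :=
  Real.sqrt_pos.2 (by have := cc_pos hn; have := vol0_pos hn; positivity)

lemma RR_pos : 0 < RR n := lt_max_of_lt_left (by have := tt_pos hn; linarith)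

lemma dd_pos : 0 < dd n :=
  div_pos (cc_pos hn) (mul_pos (VV_pos hn) (RR_pos hn))


end

section
variable {n : ℕ}

theorem dir_facts (hn : 2 ≤ n) {Ω : Set (Eu n)} (meas : MeasurableSet Ω)
    (hbd : IsBounded Ω) (hne : Ω.Nonempty)
    (hvfin : volume Ω ≠ ⊤) (hvpos : 0 < (volume Ω).toReal)
    (hVle : (volume Ω).toReal ≤ VV n)
    (hcent : (∫ x in Ω, x) = 0)
    {θ : Eu n} (hθ : ‖θ‖ = 1)
    (hQθ : (∫ x in Ω, (inner ℝ x θ : ℝ)^2) = cc n)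
    {C : ℝ} (hC : ∀ x ∈ Ω, ‖x‖ ≤ C) :
    ∃ a b : ℝ, 0 ≤ a ∧ 0 ≤ b ∧ a ≤ C ∧ b ≤ C ∧
      cc n ≤ a * b * (volume Ω).toReal ∧
      (∀ x ∈ Ω, (inner ℝ x θ : ℝ) ≤ b) ∧ (∀ x ∈ Ω, -a ≤ (inner ℝ x θ : ℝ)) ∧
      (∀ u : ℝ, (∀ x ∈ Ω, (inner ℝ x θ : ℝ) ≤ u) → b ≤ u) ∧
      (∃ y ∈ Ω, ∃ z ∈ Ω, ww n < (inner ℝ y θ : ℝ) - (inner ℝ z θ : ℝ)) := by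
  set g : Eu n → ℝ := fun x => (inner ℝ x θ : ℝ) with hg
  have hgc : Continuous g := continuous_id.inner continuous_const
  have hgbd : ∀ x ∈ Ω, |g x| ≤ C := by
    intro x hx
    calc |g x| ≤ ‖x‖ * ‖θ‖ := abs_real_inner_le_norm x θ
      _ = ‖x‖ := by rw [hθ, mul_one]
      _ ≤ C := hC x hx
  have hbddA : BddAbove (g '' Ω) := ⟨C, by rintro _ ⟨y, hy, rfl⟩; exact (abs_le.1 (hgbd y hy)).2⟩
  have hbddA' : BddAbove ((fun x => -g x) '' Ω) :=
    ⟨C, by rintro _ ⟨y, hy, rfl⟩; exact neg_le.1 ((abs_le.1 (hgbd y hy)).1)⟩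
  have hneim : (g '' Ω).Nonempty := hne.image g
  have hneim' : ((fun x => -g x) '' Ω).Nonempty := hne.image _
  set b := sSup (g '' Ω) with hbdef
  set a := sSup ((fun x => -g x) '' Ω) with hadef
  have hgb : ∀ x ∈ Ω, g x ≤ b := fun x hx => le_csSup hbddA ⟨x, hx, rfl⟩
  have hga : ∀ x ∈ Ω, -a ≤ g x := fun x hx => by
    have := le_csSup hbddA' ⟨x, hx, rfl⟩
    simp only at this; linarith
  have hbC : b ≤ C := csSup_le hneim (by rintro _ ⟨y, hy, rfl⟩; exact (abs_le.1 (hgbd y hy)).2)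
  have haC : a ≤ C := csSup_le hneim' (by
    rintro _ ⟨y, hy, rfl⟩; exact neg_le.1 ((abs_le.1 (hgbd y hy)).1))
  -- integral of g is zero
  have hid : IntegrableOn (fun x : Eu n => x) Ω volume := integrableOn_of_continuous continuous_id hbd
  have hgint : IntegrableOn g Ω volume := integrableOn_of_continuous hgc hbd
  have hg2int : IntegrableOn (fun x => g x ^ 2) Ω volume :=
    integrableOn_of_continuous (hgc.pow 2) hbd
  have hint0 : (∫ x in Ω, g x) = 0 := by
    have h1 : (∫ x in Ω, (inner ℝ θ x : ℝ)) = (inner ℝ θ (∫ x in Ω, x) : ℝ) :=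
      integral_inner hid θ
    have h2 : ∀ x : Eu n, g x = (inner ℝ θ x : ℝ) := fun x => (real_inner_comm x θ).symm
    calc (∫ x in Ω, g x) = ∫ x in Ω, (inner ℝ θ x : ℝ) := by simp_rw [h2]
      _ = (inner ℝ θ (∫ x in Ω, x) : ℝ) := h1
      _ = 0 := by rw [hcent]; exact inner_zero_right θ
  set v := (volume Ω).toReal with hvdef
  have hconst : IntegrableOn (fun _ : Eu n => (1:ℝ)) Ω volume :=
    integrableOn_const hvfin
  have hb0 : 0 ≤ b := by
    have h1 : (∫ x in Ω, g x) ≤ ∫ _x in Ω, b := by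
      apply setIntegral_mono_on hgint (integrableOn_const hvfin) meas
      exact hgb
    rw [hint0, setIntegral_const, smul_eq_mul] at h1
    simp only [Measure.real] at h1
    nlinarith
  have ha0 : 0 ≤ a := by
    have h1 : (∫ x in Ω, -g x) ≤ ∫ _x in Ω, a := by
      apply setIntegral_mono_on hgint.neg (integrableOn_const hvfin) meas
      intro x hx
      exact le_csSup hbddA' ⟨x, hx, rfl⟩
    rw [setIntegral_const, smul_eq_mul, integral_neg, hint0, neg_zero] at h1
    simp only [Measure.real] at h1
    nlinarith
  -- the key inequality cc n ≤ a*b*v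
  have hkey : cc n ≤ a * b * v := by
    have hptwise : ∀ x ∈ Ω, g x ^ 2 ≤ (b - a) * g x + a * b := by
      intro x hx
      nlinarith [hgb x hx, hga x hx]
    have hrint : IntegrableOn (fun x => (b - a) * g x + a * b) Ω volume :=
      ((hgint.const_mul (b - a)).add (integrableOn_const hvfin))
    have h1 : (∫ x in Ω, g x ^ 2) ≤ ∫ x in Ω, ((b - a) * g x + a * b) :=
      setIntegral_mono_on hg2int hrint meas hptwise
    have h2 : (∫ x in Ω, ((b - a) * g x + a * b)) = (b-a) * (∫ x in Ω, g x) + v * (a*b) := by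
      rw [integral_add (hgint.const_mul (b-a)) (integrableOn_const hvfin),
        integral_const_mul, setIntegral_const, smul_eq_mul]
      rfl
    rw [h2, hint0, mul_zero, zero_add] at h1
    rw [hQθ] at h1
    linarith
  refine ⟨a, b, ha0, hb0, haC, hbC, hkey, hgb, hga,
    fun u hu => csSup_le hneim (by rintro _ ⟨y, hy, rfl⟩; exact hu y hy), ?_⟩
  -- width points
  have hab : cc n / VV n ≤ a * b := by
    have hV := VV_pos hn
    rw [div_le_iff₀ hV]
    calc cc n ≤ a * b * v := hkey
      _ ≤ a * b * VV n := by
        apply mul_le_mul_of_nonneg_left hVle (mul_nonneg ha0 hb0)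
  have hsq : 2 * ww n ≤ a + b := by
    have h1 : ww n ≤ Real.sqrt (a * b) := Real.sqrt_le_sqrt hab
    have h2 : Real.sqrt (a * b) ≤ (a + b) / 2 := by
      rw [show (a+b)/2 = Real.sqrt (((a+b)/2)^2) from (Real.sqrt_sq (by linarith)).symm]
      apply Real.sqrt_le_sqrt
      nlinarith [sq_nonneg (a-b)]
    linarith
  have hww := ww_pos hn
  obtain ⟨_, ⟨y, hy, rfl⟩, hy2⟩ := exists_lt_of_lt_csSup hneim
    (show b - ww n / 2 < b by linarith)
  obtain ⟨_, ⟨z, hz, rfl⟩, hz2⟩ := exists_lt_of_lt_csSup hneim'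
    (show a - ww n / 2 < a by linarith)
  exact ⟨y, hy, z, hz, by simp only at hy2 hz2; linarith⟩


theorem vol_lb (hn : 2 ≤ n) {Ω : Set (Eu n)} (hconv : Convex ℝ Ω) (hne : Ω.Nonempty)
    (hvfin : volume Ω ≠ ⊤)
    (hwidth : ∀ θ : Eu n, ‖θ‖ = 1 → ∃ y ∈ Ω, ∃ z ∈ Ω,
      ww n < (inner ℝ y θ : ℝ) - (inner ℝ z θ : ℝ)) :
    vol0 n ≤ (volume Ω).toReal := by
  classical
  obtain ⟨x₀, hx₀⟩ := hne
  -- Greedy construction of an "almost orthogonal" family of vectors in Ω - x₀.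
  have claim : ∀ k, k ≤ n → ∃ (v : Fin k → Eu n) (e : Fin k → Eu n),
      (∀ i, x₀ + v i ∈ Ω) ∧ (∀ i, ‖e i‖ = 1) ∧
      (∀ i j, j < i → (inner ℝ (e i) (v j) : ℝ) = 0) ∧
      (∀ i, ww n / 2 ≤ |(inner ℝ (e i) (v i) : ℝ)|) := by
    intro k
    induction k with
    | zero =>
      exact fun _ => ⟨Fin.elim0, Fin.elim0, fun i => i.elim0, fun i => i.elim0,
        fun i => i.elim0, fun i => i.elim0⟩
    | succ k ih =>
      intro hk1
      obtain ⟨v, e, hv, he, hortho, hdiag⟩ := ih (Nat.le_of_succ_le hk1)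
      set S := Submodule.span ℝ (Set.range v) with hS
      have hrank : finrank ℝ S ≤ k := by
        have h1 : finrank ℝ S ≤ (Set.range v).toFinset.card := by
          have := finrank_span_le_card (R := ℝ) (Set.range v)
          exact this
        have h2 : (Set.range v).toFinset.card ≤ k := by
          rw [Set.toFinset_range]
          exact (Finset.card_image_le).trans (by simp)
        exact h1.trans h2
      have hSne : S ≠ ⊤ := by
        intro h
        rw [h] at hrank
        have h2 : finrank ℝ (⊤ : Submodule ℝ (Eu n)) = n := by
          rw [finrank_top, finrank_euclideanSpace_fin]
        omega
      have hObot : Sᗮ ≠ ⊥ := fun h => hSne (Submodule.orthogonal_eq_bot_iff.1 h)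
      obtain ⟨u, huS, hu0⟩ := (Submodule.ne_bot_iff _).1 hObot
      set θ := ‖u‖⁻¹ • u with hθdef
      have hθ : ‖θ‖ = 1 := norm_smul_inv_norm hu0
      have hθS : ∀ w ∈ S, (inner ℝ θ w : ℝ) = 0 := by
        intro w hw
        have h1 : (inner ℝ w u : ℝ) = 0 := (Submodule.mem_orthogonal S u).1 huS w hw
        rw [hθdef, real_inner_smul_left, real_inner_comm w u, h1, mul_zero]
      obtain ⟨y, hy, z, hz, hyz⟩ := hwidth θ hθ
      have hyz' : ww n < (inner ℝ θ (y - x₀) : ℝ) - (inner ℝ θ (z - x₀) : ℝ) := by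
        rw [inner_sub_right, inner_sub_right, real_inner_comm y θ, real_inner_comm z θ]
        linarith
      have hsel : ∃ p ∈ Ω, ww n / 2 ≤ |(inner ℝ θ (p - x₀) : ℝ)| := by
        by_cases hA : ww n / 2 ≤ |(inner ℝ θ (y - x₀) : ℝ)|
        · exact ⟨y, hy, hA⟩
        · refine ⟨z, hz, ?_⟩
          push_neg at hA
          rw [abs_lt] at hA
          have hww := ww_pos hn
          rw [le_abs]
          right
          linarith
      obtain ⟨p, hp, hpw⟩ := hsel
      refine ⟨Fin.snoc v (p - x₀), Fin.snoc e θ, ?_, ?_, ?_, ?_⟩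
      · intro i
        refine Fin.lastCases ?_ ?_ i
        · simp only [Fin.snoc_last]
          simpa using hp
        · intro j
          simp only [Fin.snoc_castSucc]
          exact hv j
      · intro i
        refine Fin.lastCases ?_ ?_ i
        · simp only [Fin.snoc_last]; exact hθ
        · intro j; simp only [Fin.snoc_castSucc]; exact he j
      · intro i
        refine Fin.lastCases ?_ ?_ i
        · intro j hj
          have hjne : j ≠ Fin.last k := ne_of_lt hj
          rw [← Fin.castSucc_castPred j hjne]
          simp only [Fin.snoc_last, Fin.snoc_castSucc]
          exact hθS _ (Submodule.subset_span (Set.mem_range_self _))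
        · intro i' j hj
          have hjlt : j < Fin.last k := lt_trans hj (Fin.castSucc_lt_last i')
          have hjne : j ≠ Fin.last k := ne_of_lt hjlt
          rw [← Fin.castSucc_castPred j hjne]
          simp only [Fin.snoc_castSucc]
          apply hortho
          have := hj
          rw [← Fin.castSucc_castPred j hjne] at this
          exact (Fin.castSucc_lt_castSucc_iff).1 this
      · intro i
        refine Fin.lastCases ?_ ?_ i
        · simp only [Fin.snoc_last]; exact hpw
        · intro j; simp only [Fin.snoc_castSucc]; exact hdiag j
  obtain ⟨v, e, hv, he, hortho, hdiag⟩ := claim n le_rfl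
  -- determinant estimates
  set Bm : Matrix (Fin n) (Fin n) ℝ := Matrix.of (fun i j => v j i) with hBm
  set Em : Matrix (Fin n) (Fin n) ℝ := Matrix.of (fun i j => e i j) with hEm
  have hmul : ∀ i j, (Em * Bm) i j = (inner ℝ (e i) (v j) : ℝ) := by
    intro i j
    rw [Matrix.mul_apply, PiLp.inner_apply]
    simp [RCLike.inner_apply, conj_trivial, hEm, hBm]
    exact Finset.sum_congr rfl (fun _ _ => mul_comm _ _)
  have htri : (Em * Bm).BlockTriangular id := by
    intro i j hij
    rw [hmul i j]
    exact hortho i j hij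
  have hdet1 : (Em * Bm).det = ∏ i, (inner ℝ (e i) (v i) : ℝ) := by
    rw [Matrix.det_of_upperTriangular htri]
    exact Finset.prod_congr rfl (fun i _ => hmul i i)
  have hww2 : (0:ℝ) ≤ ww n / 2 := by have := ww_pos hn; linarith
  have hlow : (ww n / 2)^n ≤ |(Em * Bm).det| := by
    rw [hdet1, Finset.abs_prod]
    calc (ww n / 2)^n = ∏ _i : Fin n, (ww n / 2) := by
          rw [Finset.prod_const, Finset.card_univ, Fintype.card_fin]
      _ ≤ ∏ i, |(inner ℝ (e i) (v i) : ℝ)| :=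
          Finset.prod_le_prod (fun i _ => hww2) (fun i _ => hdiag i)
  have hEdet : |Em.det| ≤ (n.factorial : ℝ) := by
    rw [Matrix.det_apply]
    calc |∑ σ : Equiv.Perm (Fin n), Equiv.Perm.sign σ • ∏ i, Em (σ i) i|
        ≤ ∑ σ : Equiv.Perm (Fin n), |Equiv.Perm.sign σ • ∏ i, Em (σ i) i| :=
          Finset.abs_sum_le_sum_abs _ _
      _ ≤ ∑ _σ : Equiv.Perm (Fin n), (1:ℝ) := by
          apply Finset.sum_le_sum
          intro σ _
          have h1 : |Equiv.Perm.sign σ • ∏ i, Em (σ i) i| = |∏ i, Em (σ i) i| := by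
            rcases Int.units_eq_one_or (Equiv.Perm.sign σ) with h | h <;> rw [h] <;> simp
          rw [h1, Finset.abs_prod]
          apply Finset.prod_le_one (fun i _ => abs_nonneg _)
          intro i _
          calc |Em (σ i) i| ≤ ‖e (σ i)‖ := coord_abs_le_norm _ _
            _ = 1 := he _
      _ = (n.factorial : ℝ) := by
          rw [Finset.sum_const, Finset.card_univ, Fintype.card_perm, Fintype.card_fin,
            nsmul_eq_mul, mul_one]
  have hfact : (0:ℝ) < (n.factorial : ℝ) := by exact_mod_cast n.factorial_pos
  have hBdet : (ww n / 2)^n / (n.factorial : ℝ) ≤ |Bm.det| := by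
    rw [div_le_iff₀ hfact]
    calc (ww n / 2)^n ≤ |(Em * Bm).det| := hlow
      _ = |Em.det| * |Bm.det| := by rw [Matrix.det_mul, abs_mul]
      _ ≤ (n.factorial : ℝ) * |Bm.det| :=
          mul_le_mul_of_nonneg_right hEdet (abs_nonneg _)
      _ = |Bm.det| * (n.factorial : ℝ) := mul_comm _ _
  -- the linear map sending the cube into Ω - x₀
  set L : Eu n →ₗ[ℝ] Eu n :=
    { toFun := fun t => ∑ i, t i • v i
      map_add' := by
        intro s t
        simp only [PiLp.add_apply, add_smul]
        rw [Finset.sum_add_distrib]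
      map_smul' := by
        intro c t
        simp only [PiLp.smul_apply, RingHom.id_apply, smul_eq_mul]
        rw [Finset.smul_sum]
        exact Finset.sum_congr rfl (fun i _ => by rw [smul_smul]) } with hL
  have hdetL : |LinearMap.det L| = |Bm.det| := by
    rw [← LinearMap.det_toMatrix (EuclideanSpace.basisFun (Fin n) ℝ).toBasis L]
    congr 2
    ext i j
    rw [LinearMap.toMatrix_apply]
    have h1 : (EuclideanSpace.basisFun (Fin n) ℝ).toBasis j = EuclideanSpace.single j 1 := by
      simp [EuclideanSpace.basisFun_apply]
    rw [h1]
    have h2 : L (EuclideanSpace.single j 1) = v j := by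
      show (∑ i, (EuclideanSpace.single j (1:ℝ)) i • v i) = v j
      rw [Finset.sum_eq_single j]
      · simp [EuclideanSpace.single_apply]
      · intro l _ hl
        rw [EuclideanSpace.single_apply, if_neg hl, zero_smul]
      · intro h; exact absurd (Finset.mem_univ j) h
    rw [h2]
    simp [OrthonormalBasis.coe_toBasis_repr_apply, EuclideanSpace.basisFun_repr, hBm]
  have hsub : ∀ t ∈ cube n, x₀ + L t ∈ Ω := by
    intro t ht
    set w : Option (Fin n) → ℝ := fun o => o.elim (1 - ∑ i, t i) (fun i => t i) with hwdef
    set z : Option (Fin n) → Eu n := fun o => o.elim x₀ (fun i => x₀ + v i) with hzdef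
    have hsum_le : ∑ i, t i ≤ 1 := by
      calc ∑ i, t i ≤ ∑ _i : Fin n, (n:ℝ)⁻¹ := Finset.sum_le_sum (fun i _ => (ht i).2)
        _ = 1 := by
          rw [Finset.sum_const, Finset.card_univ, Fintype.card_fin, nsmul_eq_mul]
          have : (n:ℝ) ≠ 0 := by positivity
          field_simp
    have hw0 : ∀ o ∈ (Finset.univ : Finset (Option (Fin n))), 0 ≤ w o := by
      rintro (_ | i) _
      · simpa [hwdef] using hsum_le
      · exact (ht i).1
    have hw1 : ∑ o : Option (Fin n), w o = 1 := by
      rw [Fintype.sum_option]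
      simp [hwdef]
    have hz : ∀ o ∈ (Finset.univ : Finset (Option (Fin n))), z o ∈ Ω := by
      rintro (_ | i) _
      · exact hx₀
      · exact hv i
    have := hconv.sum_mem hw0 hw1 hz
    have heq : ∑ o : Option (Fin n), w o • z o = x₀ + L t := by
      rw [Fintype.sum_option]
      show (1 - ∑ i, t i) • x₀ + (∑ i, t i • (x₀ + v i)) = x₀ + (∑ i, t i • v i)
      rw [Finset.sum_congr rfl (fun (i : Fin n) _ => smul_add (t i) x₀ (v i)),
        Finset.sum_add_distrib, ← Finset.sum_smul, sub_smul, one_smul]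
      abel
    rwa [heq] at this
  have himg : (fun t => x₀ + L t) '' (cube n) ⊆ Ω := by
    rintro _ ⟨t, ht, rfl⟩; exact hsub t ht
  have hvol1 : volume ((fun t => x₀ + L t) '' cube n)
      = ENNReal.ofReal |LinearMap.det L| * volume (cube n) := by
    have h0 : (fun t => x₀ + L t) '' cube n = x₀ +ᵥ (⇑L '' cube n) := by
      rw [← Set.image_vadd, Set.image_image]
      rfl
    rw [h0, measure_vadd, Measure.addHaar_image_linearMap]
  calc vol0 n = (ww n / 2)^n / (n.factorial : ℝ) * gam n := rfl
    _ ≤ |Bm.det| * gam n := mul_le_mul_of_nonneg_right hBdet (gam_pos hn).le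
    _ = |LinearMap.det L| * gam n := by rw [hdetL]
    _ = (ENNReal.ofReal |LinearMap.det L| * volume (cube n)).toReal := by
        rw [ENNReal.toReal_mul, ENNReal.toReal_ofReal (abs_nonneg _)]
        rfl
    _ = (volume ((fun t => x₀ + L t) '' cube n)).toReal := by rw [hvol1]
    _ ≤ (volume Ω).toReal := ENNReal.toReal_mono hvfin (measure_mono himg)


theorem norm_ub (hn : 2 ≤ n) {Ω : Set (Eu n)} (hconv : Convex ℝ Ω)
    (meas : MeasurableSet Ω) (hbd : IsBounded Ω) (hvfin : volume Ω ≠ ⊤)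
    (hvlb : vol0 n ≤ (volume Ω).toReal)
    (hQ : ∀ θ : Eu n, ‖θ‖ = 1 → (∫ x in Ω, (inner ℝ x θ : ℝ)^2) = cc n) :
    ∀ x₀ ∈ Ω, ‖x₀‖ ≤ RR n := by
  intro x₀ hx₀
  by_cases h4 : ‖x₀‖ ≤ 4 * tt n
  · exact h4.trans (le_max_left _ _)
  push_neg at h4
  have htt := tt_pos hn
  have hccp := cc_pos hn
  have hv0p := vol0_pos hn
  have hx0 : x₀ ≠ 0 := by
    intro h; rw [h, norm_zero] at h4; linarith
  set θ := ‖x₀‖⁻¹ • x₀ with hθdef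
  have hθ : ‖θ‖ = 1 := norm_smul_inv_norm hx0
  set g : Eu n → ℝ := fun x => (inner ℝ x θ : ℝ) with hg
  have hgc : Continuous g := continuous_id.inner continuous_const
  have hnx : (0:ℝ) < ‖x₀‖ := by linarith
  have hgx₀ : g x₀ = ‖x₀‖ := by
    rw [hg]
    simp only [hθdef, real_inner_smul_right, real_inner_self_eq_norm_sq]
    field_simp
  have hQθ := hQ θ hθ
  have hg2int : IntegrableOn (fun x => g x ^ 2) Ω volume :=
    integrableOn_of_continuous (hgc.pow 2) hbd
  set T : Set (Eu n) := {x | |g x| ≤ tt n} with hTdef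
  have hTc : MeasurableSet T := (isClosed_le hgc.abs continuous_const).measurableSet
  -- Chebyshev
  have hdm : MeasurableSet (Ω \ T) := meas.diff hTc
  have hdfin : volume (Ω \ T) ≠ ⊤ := ((measure_mono diff_subset).trans_lt hvfin.lt_top).ne
  have cheb : (tt n)^2 * (volume (Ω \ T)).toReal ≤ cc n := by
    have h1 : (tt n)^2 * (volume (Ω \ T)).toReal ≤ ∫ x in Ω \ T, g x ^ 2 := by
      refine Eq.trans_le ?_ (setIntegral_ge_of_const_le (c := (tt n)^2) hdm hdfin ?_ ?_)
      · rw [smul_eq_mul, mul_comm]; rfl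
      · intro x hx
        have h2 : tt n < |g x| := by
          have := hx.2
          simp only [hTdef, Set.mem_setOf_eq, not_le] at this
          exact this
        calc (tt n)^2 ≤ |g x|^2 := by nlinarith [abs_nonneg (g x)]
          _ = g x ^ 2 := sq_abs _
      · exact hg2int.mono_set diff_subset
    have h2 : (∫ x in Ω \ T, g x ^ 2) ≤ ∫ x in Ω, g x ^ 2 :=
      setIntegral_mono_set hg2int (Filter.Eventually.of_forall (fun x => sq_nonneg _))
        (HasSubset.Subset.eventuallyLE diff_subset)
    rw [hQθ] at h2
    linarith
  have hsplit : volume (Ω ∩ T) + volume (Ω \ T) = volume Ω := measure_inter_add_diff Ω hTc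
  have hifin : volume (Ω ∩ T) ≠ ⊤ := ((measure_mono inter_subset_left).trans_lt hvfin.lt_top).ne
  have hsplit' : (volume (Ω ∩ T)).toReal + (volume (Ω \ T)).toReal = (volume Ω).toReal := by
    rw [← ENNReal.toReal_add hifin hdfin, hsplit]
  have htt2 : (tt n)^2 = 2 * cc n / vol0 n := Real.sq_sqrt (by positivity)
  have hchebR : (volume (Ω \ T)).toReal ≤ vol0 n / 2 := by
    have h3 : (0:ℝ) ≤ (volume (Ω \ T)).toReal := ENNReal.toReal_nonneg
    rw [htt2] at cheb
    rw [div_mul_eq_mul_div, div_le_iff₀ hv0p] at cheb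
    nlinarith [hccp, h3]
  have hΩ₀lb : vol0 n / 2 ≤ (volume (Ω ∩ T)).toReal := by linarith
  -- the homothety trick
  set S : Set (Eu n) := AffineMap.homothety x₀ (2⁻¹:ℝ) '' (Ω ∩ T) with hSdef
  have hhom : ∀ y : Eu n, AffineMap.homothety x₀ (2⁻¹:ℝ) y = (2⁻¹:ℝ) • y + (2⁻¹:ℝ) • x₀ := by
    intro y
    simp only [AffineMap.homothety_apply, vsub_eq_sub, vadd_eq_add, smul_sub]
    module
  have hSsub : S ⊆ Ω := by
    rintro _ ⟨y, hy, rfl⟩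
    rw [hhom]
    exact hconv hy.1 hx₀ (by norm_num) (by norm_num) (by norm_num)
  have hSeq : S = (fun z => (2:ℝ) • z - x₀) ⁻¹' (Ω ∩ T) := by
    ext z
    constructor
    · rintro ⟨y, hy, rfl⟩
      rw [hhom]
      have : (2:ℝ) • ((2⁻¹:ℝ) • y + (2⁻¹:ℝ) • x₀) - x₀ = y := by module
      simpa [this] using hy
    · intro hz
      refine ⟨(2:ℝ) • z - x₀, hz, ?_⟩
      rw [hhom]
      module
  have hSmeas : MeasurableSet S := by
    rw [hSeq]
    exact (meas.inter hTc).preimage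
      (by fun_prop : Continuous fun z : Eu n => (2:ℝ) • z - x₀).measurable
  have hSvol : (volume S).toReal = (2⁻¹:ℝ)^n * (volume (Ω ∩ T)).toReal := by
    rw [hSdef, Measure.addHaar_image_homothety, finrank_euclideanSpace_fin,
      ENNReal.toReal_mul, ENNReal.toReal_ofReal (by positivity)]
    rw [abs_of_nonneg (by positivity : (0:ℝ) ≤ (2⁻¹:ℝ)^n)]
  have hglb : ∀ z ∈ S, ‖x₀‖/4 ≤ g z := by
    rintro _ ⟨y, hy, rfl⟩
    rw [hhom]
    have h1 : g ((2⁻¹:ℝ) • y + (2⁻¹:ℝ) • x₀) = 2⁻¹ * g y + 2⁻¹ * g x₀ := by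
      simp only [hg, inner_add_left, real_inner_smul_left]
    have h2 : -(tt n) ≤ g y := by
      have := hy.2
      simp only [hTdef, Set.mem_setOf_eq] at this
      linarith [(abs_le.1 this).1]
    rw [h1, hgx₀]
    linarith
  have hSfin : volume S ≠ ⊤ := ((measure_mono hSsub).trans_lt hvfin.lt_top).ne
  have key : (‖x₀‖/4)^2 * (volume S).toReal ≤ cc n := by
    have h1 : (‖x₀‖/4)^2 * (volume S).toReal ≤ ∫ x in S, g x ^ 2 := by
      refine Eq.trans_le ?_ (setIntegral_ge_of_const_le (c := (‖x₀‖/4)^2) hSmeas hSfin ?_ ?_)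
      · rw [smul_eq_mul, mul_comm]; rfl
      · intro z hz
        have := hglb z hz
        have h0 : (0:ℝ) ≤ ‖x₀‖/4 := by positivity
        calc (‖x₀‖/4)^2 ≤ (g z)^2 := by nlinarith
          _ = g z ^ 2 := rfl
      · exact hg2int.mono_set hSsub
    have h2 : (∫ x in S, g x ^ 2) ≤ ∫ x in Ω, g x ^ 2 :=
      setIntegral_mono_set hg2int (Filter.Eventually.of_forall (fun x => sq_nonneg _))
        (HasSubset.Subset.eventuallyLE hSsub)
    rw [hQθ] at h2
    linarith
  -- conclude
  set H := ‖x₀‖ with hH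
  set q := ((2:ℝ)^n)⁻¹ with hq'
  have hq : (2:ℝ)^n * q = 1 := by
    rw [hq']; field_simp
  have hqpos : (0:ℝ) < q := by rw [hq']; positivity
  have hqeq : (2⁻¹:ℝ)^n = q := by rw [hq', inv_pow]
  rw [hSvol, hqeq] at key
  have k1 : (H/4)^2 * (q * (vol0 n / 2)) ≤ (H/4)^2 * (q * (volume (Ω ∩ T)).toReal) := by
    apply mul_le_mul_of_nonneg_left _ (by positivity)
    exact mul_le_mul_of_nonneg_left hΩ₀lb hqpos.le
  have k2 : (H/4)^2 * (q * (vol0 n / 2)) ≤ cc n := by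
    refine k1.trans ?_
    calc (H/4)^2 * (q * (volume (Ω ∩ T)).toReal)
        = (H/4)^2 * (q * (volume (Ω ∩ T)).toReal) := rfl
      _ ≤ cc n := by
          have : (H/4)^2 * (q * (volume (Ω ∩ T)).toReal) = H^2/4^2 * (q * (volume (Ω ∩ T)).toReal) := by ring
          rw [this]
          calc H^2/4^2 * (q * (volume (Ω ∩ T)).toReal) = (H/4)^2 * (q * (volume (Ω ∩ T)).toReal) := by ring
            _ ≤ cc n := by
              have hkey' : (H/4)^2 * (q * (volume (Ω ∩ T)).toReal) ≤ cc n := by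
                calc (H/4)^2 * (q * (volume (Ω ∩ T)).toReal)
                    = (H/4)^2 * (q * (volume (Ω ∩ T)).toReal) := rfl
                  _ ≤ cc n := by nlinarith [key]
              exact hkey'
  have k3 := mul_le_mul_of_nonneg_left k2 (by positivity : (0:ℝ) ≤ 32*(2:ℝ)^n)
  have k4 : 32*(2:ℝ)^n * ((H/4)^2*(q*(vol0 n/2))) = H^2*vol0 n*((2:ℝ)^n*q) := by ring
  rw [k4, hq, mul_one] at k3
  have k5 : H^2 ≤ 32 * 2^n * cc n / vol0 n := by
    rw [le_div_iff₀ hv0p]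
    linarith
  have k6 : H ≤ Real.sqrt (32 * 2^n * cc n / vol0 n) := by
    rw [show H = Real.sqrt (H^2) from (Real.sqrt_sq (norm_nonneg x₀)).symm]
    exact Real.sqrt_le_sqrt k5
  exact k6.trans (le_max_right _ _)


theorem ball_sub (hn : 2 ≤ n) {Ω : Set (Eu n)} (hop : IsOpen Ω) (hconv : Convex ℝ Ω)
    (meas : MeasurableSet Ω) (hbd : IsBounded Ω) (hne : Ω.Nonempty)
    (hvfin : volume Ω ≠ ⊤) (hvpos : 0 < (volume Ω).toReal) (hVle : (volume Ω).toReal ≤ VV n)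
    (hcent : (∫ x in Ω, x) = 0)
    (hQ : ∀ θ : Eu n, ‖θ‖ = 1 → (∫ x in Ω, (inner ℝ x θ : ℝ)^2) = cc n)
    (hRb : ∀ x ∈ Ω, ‖x‖ ≤ RR n) :
    ball (0 : Eu n) (dd n) ⊆ Ω := by
  intro z hz
  by_contra hzΩ
  obtain ⟨f, hf⟩ := geometric_hahn_banach_open_point hconv hop hzΩ
  set u := (InnerProductSpace.toDual ℝ (Eu n)).symm f with hu
  have huf : ∀ x, (inner ℝ u x : ℝ) = f x := fun x => InnerProductSpace.toDual_symm_apply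
  have hu0 : u ≠ 0 := by
    intro h
    obtain ⟨p, hp⟩ := hne
    have h1 := hf p hp
    have h2 : f p = 0 := by rw [← huf p, h, inner_zero_left]
    have h3 : f z = 0 := by rw [← huf z, h, inner_zero_left]
    rw [h2, h3] at h1
    exact lt_irrefl _ h1
  have hnu : (0:ℝ) < ‖u‖ := norm_pos_iff.2 hu0
  set θ := ‖u‖⁻¹ • u with hθdef
  have hθ : ‖θ‖ = 1 := norm_smul_inv_norm hu0
  have hXθ : ∀ x : Eu n, (inner ℝ x θ : ℝ) = ‖u‖⁻¹ * f x := by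
    intro x
    rw [hθdef, real_inner_smul_right, real_inner_comm u x, huf]
  have hub : ∀ x ∈ Ω, (inner ℝ x θ : ℝ) ≤ ‖u‖⁻¹ * f z := by
    intro x hx
    rw [hXθ]
    exact mul_le_mul_of_nonneg_left (hf x hx).le (by positivity)
  obtain ⟨a, b, ha0, hb0, haC, hbC, hkey, hgb, hga, hmin, _⟩ :=
    dir_facts hn meas hbd hne hvfin hvpos hVle hcent hθ (hQ θ hθ) hRb
  have hble : b ≤ ‖u‖⁻¹ * f z := hmin _ hub
  have hzn : (inner ℝ z θ : ℝ) = ‖u‖⁻¹ * f z := hXθ z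
  have hzdd : ‖u‖⁻¹ * f z < dd n := by
    rw [← hzn]
    calc (inner ℝ z θ : ℝ) ≤ |(inner ℝ z θ : ℝ)| := le_abs_self _
      _ ≤ ‖z‖ * ‖θ‖ := abs_real_inner_le_norm z θ
      _ = ‖z‖ := by rw [hθ, mul_one]
      _ < dd n := by rwa [mem_ball_zero_iff] at hz
  have hbdd : b < dd n := lt_of_le_of_lt hble hzdd
  have hRp := RR_pos hn
  have hVp := VV_pos hn
  have s1 : a * b ≤ RR n * b := mul_le_mul_of_nonneg_right haC hb0
  have s2 : a * b * (volume Ω).toReal ≤ RR n * b * (volume Ω).toReal :=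
    mul_le_mul_of_nonneg_right s1 ENNReal.toReal_nonneg
  have s3 : RR n * b * (volume Ω).toReal ≤ RR n * b * VV n :=
    mul_le_mul_of_nonneg_left hVle (mul_nonneg hRp.le hb0)
  have s4 : RR n * b * VV n < RR n * dd n * VV n :=
    mul_lt_mul_of_pos_right (mul_lt_mul_of_pos_left hbdd hRp) hVp
  have s6 : RR n * dd n * VV n = cc n := by
    rw [dd]
    field_simp
  linarith [hkey]

theorem vol_ub (hn : 2 ≤ n) {Ω : Set (Eu n)} (meas : MeasurableSet Ω) (hbd : IsBounded Ω)
    (hvfin : volume Ω ≠ ⊤)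
    (hT : (∫ x in Ω, ‖x‖^2) ≤ 2) : (volume Ω).toReal ≤ VV n := by
  have hTc : MeasurableSet (ball (0:Eu n) 1) := measurableSet_ball
  have hsplit : volume (Ω ∩ ball 0 1) + volume (Ω \ ball 0 1) = volume Ω :=
    measure_inter_add_diff Ω hTc
  have hifin : volume (Ω ∩ ball (0:Eu n) 1) ≠ ⊤ :=
    ((measure_mono inter_subset_left).trans_lt hvfin.lt_top).ne
  have hdfin : volume (Ω \ ball (0:Eu n) 1) ≠ ⊤ :=
    ((measure_mono diff_subset).trans_lt hvfin.lt_top).ne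
  have hsplit' : (volume (Ω ∩ ball (0:Eu n) 1)).toReal + (volume (Ω \ ball (0:Eu n) 1)).toReal
      = (volume Ω).toReal := by
    rw [← ENNReal.toReal_add hifin hdfin, hsplit]
  have h1 : (volume (Ω ∩ ball (0:Eu n) 1)).toReal ≤ (volume (ball (0:Eu n) 1)).toReal :=
    ENNReal.toReal_mono measure_ball_lt_top.ne (measure_mono inter_subset_right)
  have h2 : (volume (Ω \ ball (0:Eu n) 1)).toReal ≤ 2 := by
    have hnint : IntegrableOn (fun x : Eu n => ‖x‖^2) Ω volume :=
      integrableOn_of_continuous (continuous_norm.pow 2) hbd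
    have h3 : 1 * (volume (Ω \ ball (0:Eu n) 1)).toReal ≤ ∫ x in Ω \ ball 0 1, ‖x‖^2 := by
      refine Eq.trans_le ?_ (setIntegral_ge_of_const_le (c := (1:ℝ)) (meas.diff hTc) hdfin ?_ ?_)
      · rw [smul_eq_mul, mul_comm]; rfl
      · intro x hx
        have h4 : ¬ (‖x‖ < 1) := by
          have := hx.2
          rwa [mem_ball_zero_iff] at this
        push_neg at h4
        nlinarith
      · exact hnint.mono_set diff_subset
    have h5 : (∫ x in Ω \ ball (0:Eu n) 1, ‖x‖^2) ≤ ∫ x in Ω, ‖x‖^2 :=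
      setIntegral_mono_set hnint (Filter.Eventually.of_forall (fun x => sq_nonneg _))
        (HasSubset.Subset.eventuallyLE diff_subset)
    linarith
  rw [VV]
  linarith

theorem convert (hn : 2 ≤ n) {Ω : Set (Eu n)} (hbd : IsBounded Ω)
    (hvpos : volume Ω ≠ 0) (hvfin : volume Ω ≠ ⊤)
    (hcent : centroid Ω = 0) (hin : ∀ y, inertia Ω y = ‖y‖^2) :
    (∫ x in Ω, x) = 0 ∧ (∀ y : Eu n, (∫ x in Ω, (inner ℝ x y : ℝ)^2) = cc n * ‖y‖^2)
      ∧ (∫ x in Ω, ‖x‖^2) ≤ 2 := by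
  have h1 : (volume Ω).toReal⁻¹ ≠ 0 :=
    inv_ne_zero (ENNReal.toReal_ne_zero.2 ⟨hvpos, hvfin⟩)
  have hcent0 : (∫ x in Ω, x) = 0 := by
    have h2 := hcent
    rw [centroid] at h2
    rcases smul_eq_zero.1 h2 with h | h
    · exact absurd h h1
    · exact h
  have hnorm2int : IntegrableOn (fun x : Eu n => ‖x‖^2) Ω volume :=
    integrableOn_of_continuous (continuous_norm.pow 2) hbd
  have hinner2int : ∀ y : Eu n, IntegrableOn (fun x : Eu n => (inner ℝ x y : ℝ)^2) Ω volume :=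
    fun y => integrableOn_of_continuous ((continuous_id.inner continuous_const).pow 2) hbd
  set T := ∫ x in Ω, ‖x‖^2 with hTdef
  have hQy : ∀ y : Eu n, (∫ x in Ω, (inner ℝ x y : ℝ)^2) = T * ‖y‖^2 - ‖y‖^2 := by
    intro y
    have hsplit : inertia Ω y = (∫ x in Ω, ‖x‖^2) * ‖y‖^2 - ∫ x in Ω, (inner ℝ x y : ℝ)^2 := by
      rw [inertia, integral_sub ((hnorm2int.mul_const _)) (hinner2int y), integral_mul_const]
    have h3 := hin y
    rw [hsplit] at h3
    linarith
  have hsingle : ∀ (x : Eu n) (i : Fin n), (inner ℝ x (EuclideanSpace.single i (1:ℝ)) : ℝ) = x i := by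
    intro x i
    rw [EuclideanSpace.inner_single_right]
    simp
  have hnorm1 : ∀ i : Fin n, ‖EuclideanSpace.single i (1:ℝ)‖ = 1 := by
    intro i
    rw [EuclideanSpace.norm_single]
    norm_num
  have hpt : ∀ x : Eu n, ∑ i, (inner ℝ x (EuclideanSpace.single i (1:ℝ)) : ℝ)^2 = ‖x‖^2 := by
    intro x
    rw [norm_sq_eq]
    exact Finset.sum_congr rfl (fun i _ => by rw [hsingle x i])
  have htrace : ∑ i : Fin n, (∫ x in Ω, (inner ℝ x (EuclideanSpace.single i (1:ℝ)) : ℝ)^2) = T := by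
    rw [← integral_finset_sum _ (fun i _ => hinner2int _)]
    simp_rw [hpt]
    rfl
  have hTeq : T = (n:ℝ) * (T - 1) := by
    calc T = ∑ i : Fin n, (∫ x in Ω, (inner ℝ x (EuclideanSpace.single i (1:ℝ)) : ℝ)^2) :=
          htrace.symm
      _ = ∑ _i : Fin n, (T - 1) := by
          refine Finset.sum_congr rfl (fun i _ => ?_)
          rw [hQy, hnorm1 i]
          ring
      _ = (n:ℝ) * (T - 1) := by
          rw [Finset.sum_const, Finset.card_univ, Fintype.card_fin, nsmul_eq_mul]
  have hn1 : ((n:ℝ) - 1) ≠ 0 := ne_of_gt (n1pos hn)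
  have hTval : T - 1 = cc n := by
    rw [cc]
    have h : ((n:ℝ) - 1) * (T - 1) = 1 := by linear_combination -hTeq
    exact eq_inv_of_mul_eq_one_right h
  refine ⟨hcent0, fun y => ?_, ?_⟩
  · rw [hQy y, ← hTval]
    ring
  · have hcc1 := cc_le_one hn
    have : T = 1 + cc n := by linarith [hTval]
    linarith


end
end JohnHelper

open JohnHelper Bornology Metric in
/-- For each dimension `n` there is `K = K(n) > 1` such that every open bounded convex set
with centroid `0` and inertia tensor `x₁² + ⋯ + xₙ²` satisfies
`K⁻¹·[-1,1]ⁿ ⊆ Ω ⊆ K·[-1,1]ⁿ`. -/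
theorem john_position_boxes (n : ℕ) :
    ∃ K : ℝ, 1 < K ∧
      ∀ Ω : Set (EuclideanSpace ℝ (Fin n)),
        IsOpen Ω → Bornology.IsBounded Ω → Convex ℝ Ω → Ω.Nonempty →
        centroid Ω = 0 → (∀ y, inertia Ω y = ‖y‖ ^ 2) →
        ({x : EuclideanSpace ℝ (Fin n) | ∀ i, |x i| ≤ K⁻¹} ⊆ Ω ∧
          Ω ⊆ {x : EuclideanSpace ℝ (Fin n) | ∀ i, |x i| ≤ K}) := by
  rcases lt_or_ge n 2 with hn | hn
  · interval_cases n
    · -- n = 0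
      refine ⟨2, by norm_num, fun Ω hop hbd hconv hne hcent hin => ⟨?_, ?_⟩⟩
      · intro x _
        obtain ⟨w, hw⟩ := hne
        have hxw : x = w := PiLp.ext (fun i => i.elim0)
        rwa [hxw]
      · intro x _ i
        exact i.elim0
    · -- n = 1 : the hypotheses are contradictory
      refine ⟨2, by norm_num, fun Ω hop hbd hconv hne hcent hin => ?_⟩
      exfalso
      have h0 : inertia Ω (EuclideanSpace.single (0 : Fin 1) (1:ℝ)) = 0 := by
        rw [inertia]
        have hpt : ∀ x : EuclideanSpace ℝ (Fin 1),
            ‖x‖^2 * ‖EuclideanSpace.single (0 : Fin 1) (1:ℝ)‖^2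
              - (inner ℝ x (EuclideanSpace.single (0 : Fin 1) (1:ℝ)) : ℝ)^2 = 0 := by
          intro x
          rw [JohnHelper.norm_sq_eq x, EuclideanSpace.inner_single_right,
            EuclideanSpace.norm_single]
          simp [Fin.sum_univ_one]
        simp_rw [hpt]
        exact integral_zero _ _
      have h1 := hin (EuclideanSpace.single (0 : Fin 1) (1:ℝ))
      rw [h0, EuclideanSpace.norm_single] at h1
      norm_num at h1
  · -- main case n ≥ 2
    have hRp := RR_pos hn
    have hddp := dd_pos hn
    have hsn : (0:ℝ) < Real.sqrt n := Real.sqrt_pos.2 (by positivity)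
    refine ⟨max (Real.sqrt n * (dd n)⁻¹ + 2) (RR n + 2), ?_, ?_⟩
    · exact lt_of_lt_of_le (by linarith) (le_max_right _ _)
    intro Ω hop hbd hconv hne hcent hin
    set K := max (Real.sqrt ↑n * (dd n)⁻¹ + 2) (RR n + 2) with hKdef
    have hK1 : Real.sqrt ↑n * (dd n)⁻¹ + 2 ≤ K := le_max_left _ _
    have hKgt : Real.sqrt ↑n * (dd n)⁻¹ < K := lt_of_lt_of_le (by linarith) hK1
    have hKpos : 0 < K := lt_trans (by positivity) hKgt
    have meas := hop.measurableSet
    have hvfin : volume Ω ≠ ⊤ := hbd.measure_lt_top.ne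
    have hvpos : volume Ω ≠ 0 := (hop.measure_pos volume hne).ne'
    have hvposR : 0 < (volume Ω).toReal := ENNReal.toReal_pos hvpos hvfin
    obtain ⟨hcent0, hQ, hT2⟩ := convert hn hbd hvpos hvfin hcent hin
    have hQunit : ∀ θ : Eu n, ‖θ‖ = 1 → (∫ x in Ω, (inner ℝ x θ:ℝ)^2) = cc n := by
      intro θ hθ
      rw [hQ θ, hθ]
      ring
    have hVle := vol_ub hn meas hbd hvfin hT2
    have hwidth : ∀ θ : Eu n, ‖θ‖ = 1 →
        ∃ y ∈ Ω, ∃ z ∈ Ω, ww n < (inner ℝ y θ : ℝ) - (inner ℝ z θ : ℝ) := by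
      intro θ hθ
      obtain ⟨C, hC⟩ := hbd.exists_norm_le
      obtain ⟨a, b, _, _, _, _, _, _, _, _, hw⟩ :=
        dir_facts hn meas hbd hne hvfin hvposR hVle hcent0 hθ (hQunit θ hθ) hC
      exact hw
    have hvlb := vol_lb hn hconv hne hvfin hwidth
    have hRb := norm_ub hn hconv meas hbd hvfin hvlb hQunit
    have hball := ball_sub hn hop hconv meas hbd hne hvfin hvposR hVle hcent0 hQunit hRb
    constructor
    · -- inner ℝ inclusion
      intro x hx
      simp only [Set.mem_setOf_eq] at hx
      apply hball
      rw [mem_ball_zero_iff]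
      have h1 : ‖x‖^2 ≤ (n:ℝ) * (K⁻¹)^2 := by
        rw [JohnHelper.norm_sq_eq]
        calc ∑ i, (x i)^2 ≤ ∑ _i : Fin n, (K⁻¹)^2 := by
              apply Finset.sum_le_sum
              intro i _
              calc (x i)^2 = |x i|^2 := (sq_abs _).symm
                _ ≤ (K⁻¹)^2 := by
                    apply pow_le_pow_left₀ (abs_nonneg _) (hx i)
          _ = (n:ℝ) * (K⁻¹)^2 := by
              rw [Finset.sum_const, Finset.card_univ, Fintype.card_fin, nsmul_eq_mul]
      have h2 : ‖x‖ ≤ Real.sqrt ↑n * K⁻¹ := by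
        rw [show ‖x‖ = Real.sqrt (‖x‖^2) from (Real.sqrt_sq (norm_nonneg x)).symm]
        calc Real.sqrt (‖x‖^2) ≤ Real.sqrt ((n:ℝ) * (K⁻¹)^2) := Real.sqrt_le_sqrt h1
          _ = Real.sqrt ↑n * K⁻¹ := by
              rw [Real.sqrt_mul (by positivity), Real.sqrt_sq (by positivity)]
      have h3 : Real.sqrt ↑n * K⁻¹ < dd n := by
        have h4 := (inv_lt_inv₀ hKpos (by positivity)).2 hKgt
        calc Real.sqrt ↑n * K⁻¹ < Real.sqrt ↑n * (Real.sqrt ↑n * (dd n)⁻¹)⁻¹ :=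
              mul_lt_mul_of_pos_left h4 hsn
          _ = dd n := by field_simp
      linarith
    · intro x hx i
      have h2 := coord_abs_le_norm x i
      have h3 : RR n ≤ K := le_trans (by linarith) (le_max_right _ _)
      have := hRb x hx
      simp only [Set.mem_setOf_eq]
      linarith
end
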